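/- Let A be a finite nonempty set and s, s^Rep : A → ℝ functions with values in [0,1]. Let (v_t)_{t∈ℕ} be a sequence of probability vectors on A satisfying ⟨s^Rep, v_{t+1}⟩ = ⟨s, v_t⟩ for all t ∈ ℕ. Let p : ℕ → ℝ be nonincreasing with 0 ≤ p_t ≤ 1 for all t, and suppose the partial sums Σ_{t=0}^{T−1} p_t tend to infinity as T → ∞. Then lim_{T→∞} (Σ_{t=0}^{T−1} p_t · ⟨s − s^Rep, v_t⟩) / (Σ_{t=0}^{T−1} p_t) = 0. (Abstract form of the paper's Theorem 3, first case: for a Markov strategy in a repeated game with infinite expected number of rounds, s − s^Rep is a ruling vector.) -/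

import Mathlib

open Filter Finset Topology

/-- Abstract form of the paper's Theorem 3, first case: in a repeated game with an
infinite expected number of rounds, `s - s^Rep` is a ruling vector for a Markov
strategy. -/
theorem stmt3 {A : Type*} [Fintype A] [Nonempty A]
    (s sRep : A → ℝ)
    (hs : ∀ a, s a ∈ Set.Icc (0 : ℝ) 1)
    (hsRep : ∀ a, sRep a ∈ Set.Icc (0 : ℝ) 1)
    (v : ℕ → A → ℝ)
    (hv_nonneg : ∀ t a, 0 ≤ v t a)
    (hv_sum : ∀ t, ∑ a, v t a = 1)
    (hstep : ∀ t, ∑ a, sRep a * v (t + 1) a = ∑ a, s a * v t a)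
    (p : ℕ → ℝ)
    (hp_mono : Antitone p)
    (hp_mem : ∀ t, p t ∈ Set.Icc (0 : ℝ) 1)
    (hp_div : Tendsto (fun T => ∑ t ∈ Finset.range T, p t) atTop atTop) :
    Tendsto
      (fun T => (∑ t ∈ Finset.range T, p t * (∑ a, (s a - sRep a) * v t a)) /
        (∑ t ∈ Finset.range T, p t)) atTop (𝓝 0) := by
  set g : ℕ → ℝ := fun t => ∑ a, sRep a * v t a with hg
  have hg0 : ∀ t, 0 ≤ g t := fun t =>
    Finset.sum_nonneg fun a _ => mul_nonneg (hsRep a).1 (hv_nonneg t a)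
  have hg1 : ∀ t, g t ≤ 1 := by
    intro t
    calc g t ≤ ∑ a, v t a := Finset.sum_le_sum fun a _ => by
          nlinarith [(hsRep a).2, hv_nonneg t a, (hsRep a).1]
    _ = 1 := hv_sum t
  have hterm : ∀ t, (∑ a, (s a - sRep a) * v t a) = g (t + 1) - g t := by
    intro t
    have : (∑ a, (s a - sRep a) * v t a) = (∑ a, s a * v t a) - ∑ a, sRep a * v t a := by
      rw [← Finset.sum_sub_distrib]; congr 1; ext a; ring
    rw [this, ← hstep t]
  set N : ℕ → ℝ := fun T => ∑ t ∈ Finset.range T, p t * (g (t + 1) - g t) with hN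
  have hp0 : ∀ t, 0 ≤ p t := fun t => (hp_mem t).1
  have key : ∀ T, -(p 0 * g 0) ≤ N T - p T * g T ∧ N T - p T * g T + p T ≤ p 0 := by
    intro T
    induction T with
    | zero =>
      constructor <;> simp [hN] <;> nlinarith [hp0 0, hg0 0, mul_nonneg (hp0 0) (hg0 0)]
    | succ T ih =>
      have hstep2 : N (T + 1) - p (T + 1) * g (T + 1)
          = (N T - p T * g T) + (p T - p (T + 1)) * g (T + 1) := by
        simp [hN, Finset.sum_range_succ]; ring
      have hpm : p (T + 1) ≤ p T := hp_mono (Nat.le_succ T)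
      constructor
      · rw [hstep2]
        nlinarith [hg0 (T + 1), ih.1]
      · rw [hstep2]
        nlinarith [hg1 (T + 1), hg0 (T + 1), ih.2]
  have hbound : ∀ T, |N T| ≤ 1 := by
    intro T
    rw [abs_le]
    have h1 := (key T).1
    have h2 := (key T).2
    have := hg0 T
    have := hg1 T
    have := hp0 T
    have hp01 := (hp_mem 0).2
    have hg01 := hg1 0
    have hg00 := hg0 0
    have hp00 := hp0 0
    constructor <;> nlinarith
  simp only [hterm]
  show Tendsto (fun T => N T / (∑ t ∈ Finset.range T, p t)) atTop (𝓝 0)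
  have hev : ∀ᶠ T in atTop, ‖N T / (∑ t ∈ Finset.range T, p t)‖
      ≤ 1 / (∑ t ∈ Finset.range T, p t) := by
    filter_upwards [hp_div.eventually_ge_atTop 1] with T hT
    rw [norm_div, Real.norm_eq_abs, Real.norm_eq_abs,
      abs_of_nonneg (show (0:ℝ) ≤ ∑ t ∈ Finset.range T, p t by linarith)]
    gcongr
    · exact hbound T
    all_goals linarith
  have hlim : Tendsto (fun T => 1 / (∑ t ∈ Finset.range T, p t)) atTop (𝓝 0) := by
    simpa [Pi.inv_def] using hp_div.inv_tendsto_atTop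
  exact squeeze_zero_norm' hev hlim
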